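/- Let (X,d) be a metric space, (Y,d_Y) a metric space, f : X → Y a map, and L, δ > 0. Then the set E := {x ∈ X : for all y ∈ X with d(x,y) < δ, d_Y(f(x),f(y)) ≤ L·d(x,y)} is closed in X. -/

import Mathlib

/-- For a map `f : X → Y` between metric spaces and `L, δ > 0`, the set
`E := {x | ∀ y, d(x,y) < δ → d_Y(f x, f y) ≤ L * d(x,y)}` is closed. -/
theorem stmt_0 {X Y : Type*} [MetricSpace X] [MetricSpace Y]
    (f : X → Y) (L δ : ℝ) (hL : 0 < L) (hδ : 0 < δ) :
    IsClosed {x : X | ∀ y : X, dist x y < δ → dist (f x) (f y) ≤ L * dist x y} := by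
  rw [← isSeqClosed_iff_isClosed]
  intro u x hu hux y hy
  have hd : Filter.Tendsto (fun n => dist (u n) x) Filter.atTop (nhds 0) :=
    tendsto_iff_dist_tendsto_zero.mp hux
  have hclose : ∀ᶠ n in Filter.atTop, dist (u n) x < δ :=
    hd.eventually_lt_const hδ
  -- f (u n) → f x
  have hfd : Filter.Tendsto (fun n => dist (f (u n)) (f x)) Filter.atTop (nhds 0) := by
    have hbound : ∀ᶠ n in Filter.atTop, dist (f (u n)) (f x) ≤ L * dist (u n) x := by
      filter_upwards [hclose] with n hn
      exact hu n x hn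
    have hlim : Filter.Tendsto (fun n => L * dist (u n) x) Filter.atTop (nhds 0) := by
      simpa using hd.const_mul L
    exact squeeze_zero' (by filter_upwards with n; exact dist_nonneg) hbound hlim
  -- dist (u n) y → dist x y
  have hdy : Filter.Tendsto (fun n => dist (u n) y) Filter.atTop (nhds (dist x y)) :=
    (Continuous.dist continuous_id continuous_const).continuousAt.tendsto.comp hux
  have hyclose : ∀ᶠ n in Filter.atTop, dist (u n) y < δ :=
    hdy.eventually_lt_const hy
  have hmain : ∀ᶠ n in Filter.atTop,
      dist (f x) (f y) ≤ dist (f (u n)) (f x) + L * dist (u n) y := by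
    filter_upwards [hyclose] with n hn
    calc dist (f x) (f y) ≤ dist (f x) (f (u n)) + dist (f (u n)) (f y) := dist_triangle _ _ _
    _ ≤ dist (f (u n)) (f x) + L * dist (u n) y := by
        rw [dist_comm (f x)]
        exact add_le_add le_rfl (hu n y hn)
  have hlim : Filter.Tendsto (fun n => dist (f (u n)) (f x) + L * dist (u n) y)
      Filter.atTop (nhds (0 + L * dist x y)) := hfd.add (hdy.const_mul L)
  have := ge_of_tendsto hlim hmain
  linarith
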